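/- Let Ã be a real n×n matrix, let v ∈ ℝ^n be nonzero, and suppose there are a real n×m matrix V_m and a real m×m upper Hessenberg matrix H_m such that Ã V_m = V_m H_m (i.e. the Krylov factorization holds with residual term h_{m+1,m} = 0, the 'happy breakdown' case) and the first column of V_m equals v/‖v‖. Then for every τ ∈ ℝ, the Krylov approximation is exact: e^{τÃ} v = ‖v‖ V_m e^{τH_m} e_1, where e_1 is the first standard basis vector of ℝ^m. -/

import Mathlib

open Matrix

/-- The Euclidean norm of a vector in `ℝ^n`. -/
noncomputable def euclNorm {n : ℕ} (v : Fin n → ℝ) : ℝ :=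
  ‖(WithLp.equiv 2 (Fin n → ℝ)).symm v‖

section aux

attribute [local instance] Matrix.linftyOpNormedAddCommGroup Matrix.linftyOpNormedRing
  Matrix.linftyOpNormedAlgebra

noncomputable def mulRightLM {n m : ℕ} (V : Matrix (Fin n) (Fin m) ℝ) :
    Matrix (Fin n) (Fin n) ℝ →ₗ[ℝ] Matrix (Fin n) (Fin m) ℝ where
  toFun X := X * V
  map_add' X Y := Matrix.add_mul X Y V
  map_smul' c X := Matrix.smul_mul c X V

noncomputable def mulLeftLM {n m : ℕ} (V : Matrix (Fin n) (Fin m) ℝ) :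
    Matrix (Fin m) (Fin m) ℝ →ₗ[ℝ] Matrix (Fin n) (Fin m) ℝ where
  toFun X := V * X
  map_add' X Y := Matrix.mul_add V X Y
  map_smul' c X := Matrix.mul_smul V c X

lemma pow_intertwine {n m : ℕ} (A : Matrix (Fin n) (Fin n) ℝ)
    (V : Matrix (Fin n) (Fin m) ℝ) (H : Matrix (Fin m) (Fin m) ℝ)
    (h : A * V = V * H) : ∀ k : ℕ, A ^ k * V = V * H ^ k := by
  intro k
  induction k with
  | zero => simp
  | succ k ih =>
    rw [pow_succ', pow_succ', Matrix.mul_assoc, ih, ← Matrix.mul_assoc, h, Matrix.mul_assoc]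

lemma exp_intertwine {n m : ℕ} (A : Matrix (Fin n) (Fin n) ℝ)
    (V : Matrix (Fin n) (Fin m) ℝ) (H : Matrix (Fin m) (Fin m) ℝ)
    (h : A * V = V * H) :
    NormedSpace.exp A * V = V * NormedSpace.exp H := by
  have hL : Continuous (mulRightLM V) := LinearMap.continuous_of_finiteDimensional _
  have hR : Continuous (mulLeftLM V) := LinearMap.continuous_of_finiteDimensional _
  have hsA := NormedSpace.expSeries_summable' (𝕂 := ℝ) A
  have hsH := NormedSpace.expSeries_summable' (𝕂 := ℝ) H
  rw [NormedSpace.exp_eq_tsum (𝕂 := ℝ), NormedSpace.exp_eq_tsum (𝕂 := ℝ)]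
  have h1 : mulRightLM V (∑' k : ℕ, (k.factorial : ℝ)⁻¹ • A ^ k)
      = ∑' k : ℕ, mulRightLM V ((k.factorial : ℝ)⁻¹ • A ^ k) :=
    hsA.map_tsum (mulRightLM V) hL
  have h2 : mulLeftLM V (∑' k : ℕ, (k.factorial : ℝ)⁻¹ • H ^ k)
      = ∑' k : ℕ, mulLeftLM V ((k.factorial : ℝ)⁻¹ • H ^ k) :=
    hsH.map_tsum (mulLeftLM V) hR
  show mulRightLM V _ = mulLeftLM V _
  rw [h1, h2]
  congr 1
  funext k
  show ((k.factorial : ℝ)⁻¹ • A ^ k) * V = V * ((k.factorial : ℝ)⁻¹ • H ^ k)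
  rw [Matrix.smul_mul, pow_intertwine A V H h k, Matrix.mul_smul]

end aux

theorem stmt12 {n m : ℕ} (hm : 0 < m) (Atil : Matrix (Fin n) (Fin n) ℝ)
    (v : Fin n → ℝ) (hv : v ≠ 0)
    (V : Matrix (Fin n) (Fin m) ℝ) (H : Matrix (Fin m) (Fin m) ℝ)
    (hHess : ∀ i j : Fin m, (j : ℕ) + 1 < (i : ℕ) → H i j = 0)
    (hfact : Atil * V = V * H)
    (hcol : ∀ i, V i ⟨0, hm⟩ = v i / euclNorm v) :
    ∀ τ : ℝ,
      (NormedSpace.exp (τ • Atil)).mulVec v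
        = euclNorm v • V.mulVec ((NormedSpace.exp (τ • H)).mulVec
            (fun k : Fin m => if (k : ℕ) = 0 then (1 : ℝ) else 0)) := by
  intro τ
  set e1 : Fin m → ℝ := fun k : Fin m => if (k : ℕ) = 0 then (1 : ℝ) else 0 with he1
  have hnorm : euclNorm v ≠ 0 := by
    simp only [euclNorm, norm_ne_zero_iff]
    intro h
    apply hv
    have := congrArg (WithLp.equiv 2 (Fin n → ℝ)) h
    simpa using this
  have hve : v = euclNorm v • V.mulVec e1 := by
    funext i
    have hv0 : V.mulVec e1 i = V i ⟨0, hm⟩ := by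
      simp only [mulVec, dotProduct, he1]
      rw [Finset.sum_eq_single (⟨0, hm⟩ : Fin m)]
      · simp
      · intro b _ hb
        have : (b : ℕ) ≠ 0 := fun h => hb (Fin.ext h)
        simp [this]
      · simp
    rw [Pi.smul_apply, hv0, hcol i, smul_eq_mul]
    field_simp
  have hfactτ : (τ • Atil) * V = V * (τ • H) := by
    rw [Matrix.smul_mul, hfact, Matrix.mul_smul]
  have hexp := exp_intertwine (τ • Atil) V (τ • H) hfactτ
  calc (NormedSpace.exp (τ • Atil)).mulVec v
      = (NormedSpace.exp (τ • Atil)).mulVec (euclNorm v • V.mulVec e1) := by rw [← hve]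
    _ = euclNorm v • (NormedSpace.exp (τ • Atil)).mulVec (V.mulVec e1) := by
        rw [mulVec_smul]
    _ = euclNorm v • (NormedSpace.exp (τ • Atil) * V).mulVec e1 := by
        rw [mulVec_mulVec]
    _ = euclNorm v • (V * NormedSpace.exp (τ • H)).mulVec e1 := by rw [hexp]
    _ = euclNorm v • V.mulVec ((NormedSpace.exp (τ • H)).mulVec e1) := by
        rw [mulVec_mulVec]
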